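/- μ_{j,ρ} converges weakly to ν_j as ρ → 0, uniformly over j ∈ J(ρ), if and only if for every fixed bounded continuous function f : S → ℝ the integrals converge uniformly, i.e. for every ε > 0 there exists ρ₀ ∈ (0,1) such that |∫_S f dμ_{j,ρ} − ∫_S f dν_j| < ε for all ρ ∈ (0,ρ₀) and all j ∈ J(ρ). -/

import Mathlib

open MeasureTheory Filter Topology

/-- Uniform weak convergence `μ_{j,ρ} → ν_j` (as `ρ → 0`, uniformly over
`j ∈ J(ρ)`) holds if and only if for every fixed bounded continuous `f : S → ℝ` the integrals
`∫ f dμ_{j,ρ}` converge to `∫ f dν_j` uniformly over `j ∈ J(ρ)` as `ρ → 0`. -/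
theorem uniform_weak_convergence_iff_uniform_integrals
    {S : Type*} [TopologicalSpace S] [TopologicalSpace.SeparableSpace S]
    [TopologicalSpace.MetrizableSpace S] [MeasurableSpace S] [BorelSpace S]
    {J : Type*} (Jρ : ℝ → Set J)
    (mD : MetricSpace (ProbabilityMeasure S))
    (hmD : mD.toPseudoMetricSpace.toUniformSpace.toTopologicalSpace
      = (inferInstance : TopologicalSpace (ProbabilityMeasure S)))
    (C : Set (ProbabilityMeasure S)) (hC : IsCompact C)
    (μ : ℝ → J → ProbabilityMeasure S)
    (ν : J → ProbabilityMeasure S) (hν : ∀ j, ν j ∈ C) :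
    (∀ ε > (0 : ℝ), ∃ ρ₀ ∈ Set.Ioo (0 : ℝ) 1, ∀ ρ ∈ Set.Ioo (0 : ℝ) ρ₀, ∀ j ∈ Jρ ρ,
        @dist _ mD.toPseudoMetricSpace.toDist (μ ρ j) (ν j) < ε)
    ↔ (∀ f : BoundedContinuousFunction S ℝ,
        ∀ ε > (0 : ℝ), ∃ ρ₀ ∈ Set.Ioo (0 : ℝ) 1, ∀ ρ ∈ Set.Ioo (0 : ℝ) ρ₀, ∀ j ∈ Jρ ρ,
          |(∫ x, f x ∂((μ ρ j : Measure S))) - ∫ x, f x ∂((ν j : Measure S))| < ε) := by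
  letI mS : MetricSpace (ProbabilityMeasure S) := mD.replaceTopology hmD.symm
  have hd : ∀ a b : ProbabilityMeasure S,
      @dist _ mD.toPseudoMetricSpace.toDist a b = dist a b := fun _ _ => rfl
  simp only [hd]
  constructor
  · -- forward
    intro h f ε hε
    set g : ProbabilityMeasure S → ℝ := fun m => ∫ x, f x ∂(m : Measure S) with hg
    have hgc : Continuous g :=
      MeasureTheory.ProbabilityMeasure.continuous_integral_boundedContinuousFunction f
    have hr : ∀ c : ProbabilityMeasure S, ∃ r > 0, ∀ m, dist m c < r → |g m - g c| < ε / 2 := by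
      intro c
      obtain ⟨δ, hδ, hδ'⟩ :=
        Metric.continuousAt_iff.mp (hgc.continuousAt (x := c)) (ε / 2) (by linarith)
      exact ⟨δ, hδ, fun m hm => by
        have := hδ' hm
        rwa [Real.dist_eq] at this⟩
    choose r hrpos hrball using hr
    obtain ⟨t, ht⟩ := hC.elim_finite_subcover
      (fun c : ProbabilityMeasure S => Metric.ball c (r c / 2))
      (fun c => Metric.isOpen_ball)
      (fun x hx => Set.mem_iUnion.2 ⟨x, Metric.mem_ball_self (by have := hrpos x; linarith)⟩)
    rcases t.eq_empty_or_nonempty with hte | hte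
    · refine ⟨1/2, ⟨by norm_num, by norm_num⟩, fun ρ hρ j hj => ?_⟩
      exfalso
      have := ht (hν j)
      simp [hte] at this
    · set δ : ℝ := t.inf' hte (fun c => r c / 2) with hδdef
      have hδpos : 0 < δ := by
        rw [hδdef]
        refine (Finset.lt_inf'_iff hte).mpr fun c _ => ?_
        have := hrpos c; linarith
      obtain ⟨ρ₀, hρ₀, hρ₀'⟩ := h δ hδpos
      refine ⟨ρ₀, hρ₀, fun ρ hρ j hj => ?_⟩
      have hdist := hρ₀' ρ hρ j hj
      have hνC := ht (hν j)
      simp only [Set.mem_iUnion, Metric.mem_ball] at hνC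
      obtain ⟨c, hct, hcd⟩ := hνC
      have hδle : δ ≤ r c / 2 := Finset.inf'_le _ hct
      have h1 : dist (μ ρ j) c < r c := by
        calc dist (μ ρ j) c ≤ dist (μ ρ j) (ν j) + dist (ν j) c := dist_triangle _ _ _
          _ < δ + r c / 2 := by linarith
          _ ≤ r c := by linarith
      have h2 : |g (μ ρ j) - g c| < ε / 2 := hrball c _ h1
      have h3 : |g (ν j) - g c| < ε / 2 := hrball c _ (by linarith)
      calc |g (μ ρ j) - g (ν j)| ≤ |g (μ ρ j) - g c| + |g c - g (ν j)| := abs_sub_le _ _ _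
        _ = |g (μ ρ j) - g c| + |g (ν j) - g c| := by rw [abs_sub_comm (g c)]
        _ < ε := by linarith
  · -- backward
    intro h
    by_contra hcon
    push_neg at hcon
    obtain ⟨ε, hε, hbad⟩ := hcon
    have hsel : ∀ n : ℕ, ∃ ρ ∈ Set.Ioo (0:ℝ) (1/(n+2)), ∃ j ∈ Jρ ρ,
        ε ≤ dist (μ ρ j) (ν j) := by
      intro n
      have hmem : (1:ℝ)/(n+2) ∈ Set.Ioo (0:ℝ) 1 := by
        constructor
        · positivity
        · rw [div_lt_one (by positivity)]
          have : (0:ℝ) ≤ (n:ℝ) := Nat.cast_nonneg n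
          linarith
      obtain ⟨ρ, hρ, j, hj, hd'⟩ := hbad _ hmem
      exact ⟨ρ, hρ, j, hj, hd'⟩
    choose ρn hρn jn hjn hdn using hsel
    obtain ⟨νs, hνsC, φ, hφ, hφtend⟩ := hC.isSeqCompact (x := fun n => ν (jn n))
      (fun n => hν _)
    have hint_ν : ∀ f : BoundedContinuousFunction S ℝ,
        Tendsto (fun k => ∫ x, f x ∂((ν (jn (φ k))) : Measure S)) atTop
          (𝓝 (∫ x, f x ∂(νs : Measure S))) :=
      fun f => MeasureTheory.ProbabilityMeasure.tendsto_iff_forall_integral_tendsto.mp hφtend f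
    have hρsmall : ∀ ρ₀ > (0:ℝ), ∀ᶠ k in atTop, ρn (φ k) ∈ Set.Ioo (0:ℝ) ρ₀ := by
      intro ρ₀ hρ₀
      have htend : Tendsto (fun k : ℕ => (1:ℝ)/(k+2)) atTop (𝓝 0) := by
        have : Tendsto (fun n : ℕ => 1 / ((n : ℝ) + 1)) atTop (𝓝 0) :=
          tendsto_one_div_add_atTop_nhds_zero_nat
        have h2 : Tendsto (fun k : ℕ => (k:ℝ)+2) atTop atTop :=
          tendsto_atTop_add_const_right _ 2 tendsto_natCast_atTop_atTop
        simpa [Pi.inv_def] using h2.inv_tendsto_atTop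
      have hev : ∀ᶠ k : ℕ in atTop, (1:ℝ)/((k:ℝ)+2) < ρ₀ :=
        htend.eventually (eventually_lt_nhds hρ₀)
      filter_upwards [hev] with k hk
      refine ⟨(hρn (φ k)).1, lt_trans (hρn (φ k)).2 ?_⟩
      calc (1:ℝ)/(φ k + 2) ≤ 1/(k+2) := by
            apply div_le_div_of_nonneg_left (by norm_num) (by positivity)
            have : (k:ℝ) ≤ φ k := by exact_mod_cast hφ.le_apply
            linarith
        _ < ρ₀ := hk
    have hdiff : ∀ f : BoundedContinuousFunction S ℝ,
        Tendsto (fun k => (∫ x, f x ∂((μ (ρn (φ k)) (jn (φ k))) : Measure S))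
          - ∫ x, f x ∂((ν (jn (φ k))) : Measure S)) atTop (𝓝 0) := by
      intro f
      rw [Metric.tendsto_atTop]
      intro ε' hε'
      obtain ⟨ρ₀, hρ₀mem, hρ₀'⟩ := h f ε' hε'
      have := hρsmall ρ₀ hρ₀mem.1
      rw [eventually_atTop] at this
      obtain ⟨N, hN⟩ := this
      refine ⟨N, fun k hk => ?_⟩
      have := hρ₀' _ (hN k hk) _ (hjn (φ k))
      rwa [Real.dist_eq, sub_zero]
    have hint_μ : Tendsto (fun k => μ (ρn (φ k)) (jn (φ k))) atTop (𝓝 νs) := by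
      rw [MeasureTheory.ProbabilityMeasure.tendsto_iff_forall_integral_tendsto]
      intro f
      have := (hdiff f).add (hint_ν f)
      simpa using this
    have hdtend : Tendsto (fun k => dist (μ (ρn (φ k)) (jn (φ k))) (ν (jn (φ k)))) atTop
        (𝓝 (dist νs νs)) := hint_μ.dist hφtend
    rw [dist_self] at hdtend
    have : ∀ᶠ k in atTop, dist (μ (ρn (φ k)) (jn (φ k))) (ν (jn (φ k))) < ε :=
      hdtend.eventually (eventually_lt_nhds hε)
    obtain ⟨k, hk⟩ := this.exists
    exact absurd (hdn (φ k)) (not_le.mpr hk)
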